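/- Let A = (Q, q₀, δ, F) be a simple (co-Büchi) linear weak alternating automaton. Then L(A) ≠ ∅ if and only if there exist a finite sequence s₀ … s_n of states (s_i ⊆ V), a finite run dag Δ = e₀ … e_n of A over s₀ … s_n with configurations c₀ … c_{n+1}, and some k ≤ n such that (1) c_k = c_{n+1}, and (2) for every q ∈ F there is some j with k ≤ j ≤ n and q ∉ c_j. -/

import Mathlib

/-- Transition formulas over atomic propositions `V` and locations `Q`:
propositional formulas built from `true`, `false`, literals `v` / `¬v`,
atoms `q ∈ Q` (occurring only positively), conjunction and disjunction. -/
inductive TransForm (V Q : Type) : Type where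
  | tt : TransForm V Q
  | ff : TransForm V Q
  | pos : V → TransForm V Q
  | neg : V → TransForm V Q
  | atom : Q → TransForm V Q
  | and : TransForm V Q → TransForm V Q → TransForm V Q
  | or : TransForm V Q → TransForm V Q → TransForm V Q

/-- Satisfaction of a transition formula by a pair `(s, X)` with `s ⊆ V`, `X ⊆ Q`. -/
def TransForm.sat {V Q : Type} (s : Set V) (X : Set Q) : TransForm V Q → Prop
  | .tt => True
  | .ff => False
  | .pos v => v ∈ s
  | .neg v => v ∉ s
  | .atom q => q ∈ X
  | .and f g => f.sat s X ∧ g.sat s X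
  | .or f g => f.sat s X ∨ g.sat s X

/-- `f.occurs q` holds iff location `q` occurs in the transition formula `f`. -/
def TransForm.occurs {V Q : Type} (q : Q) : TransForm V Q → Prop
  | .atom q' => q' = q
  | .and f g => f.occurs q ∨ g.occurs q
  | .or f g => f.occurs q ∨ g.occurs q
  | _ => False

/-- A (co-Büchi) linear weak alternating automaton over propositions `V` and
locations `Q`: initial location, transition function, co-final set `F`, and the
requirement that `q' ⪯ q ↔ q →* q'` is a partial order (reflexivity and
transitivity are automatic; antisymmetry is the actual condition). -/
structure LWAA (V Q : Type) where
  init : Q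
  delta : Q → TransForm V Q
  final : Set Q
  antisymm : ∀ q q' : Q,
    Relation.ReflTransGen (fun a b => (delta a).occurs b) q q' →
    Relation.ReflTransGen (fun a b => (delta a).occurs b) q' q → q = q'

namespace LWAA

variable {V Q : Type}

/-- The configurations `c₀ c₁ …` determined by a sequence of edge sets:
`c₀ = {q₀}` and `c_{i+1} = e_i(c_i)`. -/
def configs (A : LWAA V Q) (e : ℕ → Set (Q × Q)) : ℕ → Set Q
  | 0 => {A.init}
  | i + 1 => {q' | ∃ q ∈ A.configs e i, (q, q') ∈ e i}

/-- `Δ = e₀e₁…` is a run dag of `A` over the temporal structure `σ`. -/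
def IsRunDag (A : LWAA V Q) (σ : ℕ → Set V) (e : ℕ → Set (Q × Q)) : Prop :=
  ∀ i : ℕ,
    (∀ p ∈ e i, p.1 ∈ A.configs e i) ∧
    (∀ p ∈ e i, (A.delta p.1).occurs p.2) ∧
    (∀ q ∈ A.configs e i, (A.delta q).sat (σ i) {q' | (q, q') ∈ e i})

/-- `e₀ … e_n` is a finite run dag of `A` over the finite sequence of states
`s₀ … s_n` (only the values for indices `≤ n` are relevant). -/
def IsFinRunDag (A : LWAA V Q) (s : ℕ → Set V) (e : ℕ → Set (Q × Q)) (n : ℕ) : Prop :=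
  ∀ i ≤ n,
    (∀ p ∈ e i, p.1 ∈ A.configs e i) ∧
    (∀ p ∈ e i, (A.delta p.1).occurs p.2) ∧
    (∀ q ∈ A.configs e i, (A.delta q).sat (s i) {q' | (q, q') ∈ e i})

/-- A path of the run dag given by the edges `e`. -/
def IsPath (A : LWAA V Q) (e : ℕ → Set (Q × Q)) (p : ℕ → Q) : Prop :=
  p 0 = A.init ∧ ∀ i : ℕ, (p i, p (i + 1)) ∈ e i

/-- Co-Büchi acceptance: every path visits `F` only finitely often. -/
def Accepting (A : LWAA V Q) (e : ℕ → Set (Q × Q)) : Prop :=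
  ∀ p : ℕ → Q, A.IsPath e p → {i : ℕ | p i ∈ A.final}.Finite

/-- The language of `A`: temporal structures admitting an accepting run dag. -/
def Lang (A : LWAA V Q) : Set (ℕ → Set V) :=
  {σ | ∃ e : ℕ → Set (Q × Q), A.IsRunDag σ e ∧ A.Accepting e}

/-- An LWAA is simple if whenever a co-final location `q` can be activated
from `q'` while being exited in the same transition, `q'` has an alternative
transition avoiding `q`. -/
def Simple (A : LWAA V Q) : Prop :=
  ∀ q ∈ A.final, ∀ q' : Q, ∀ s : Set V, ∀ X Y : Set Q,
    q ∉ X → q ∉ Y →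
    (A.delta q').sat s (X ∪ {q}) → (A.delta q).sat s Y →
    (A.delta q').sat s (X ∪ Y)

end LWAA
section Aux
variable {V Q : Type}

attribute [local instance] Classical.propDecidable

lemma sat_mono {s : Set V} {X Y : Set Q} (hXY : X ⊆ Y) :
    ∀ {f : TransForm V Q}, f.sat s X → f.sat s Y := by
  intro f
  induction f with
  | tt => intro _; trivial
  | ff => intro h; exact h.elim
  | pos v => exact id
  | neg v => exact id
  | atom a => exact fun h => hXY h
  | and f g ihf ihg => exact fun h => ⟨ihf h.1, ihg h.2⟩
  | or f g ihf ihg => exact fun h => h.elim (fun h => Or.inl (ihf h)) (fun h => Or.inr (ihg h))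

lemma exists_shrink {s : Set V} :
    ∀ {f : TransForm V Q} {Z : Set Q}, f.sat s Z →
      ∃ Z' : Set Q, Z' ⊆ Z ∧ (∀ r ∈ Z', f.occurs r) ∧ f.sat s Z' := by
  intro f
  induction f with
  | tt => exact fun _ => ⟨∅, by simp, by simp, trivial⟩
  | ff => exact fun h => h.elim
  | pos v => exact fun h => ⟨∅, by simp, by simp [TransForm.occurs], h⟩
  | neg v => exact fun h => ⟨∅, by simp, by simp [TransForm.occurs], h⟩
  | atom a => exact fun h => ⟨{a}, by simpa [TransForm.sat] using h, by simp [TransForm.occurs], by simp [TransForm.sat]⟩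
  | and f g ihf ihg =>
      rintro Z ⟨hf, hg⟩
      obtain ⟨Z₁, hZ₁, ho₁, hs₁⟩ := ihf hf
      obtain ⟨Z₂, hZ₂, ho₂, hs₂⟩ := ihg hg
      refine ⟨Z₁ ∪ Z₂, Set.union_subset hZ₁ hZ₂, ?_, ?_⟩
      · rintro r (hr | hr)
        · exact Or.inl (ho₁ r hr)
        · exact Or.inr (ho₂ r hr)
      · exact ⟨sat_mono Set.subset_union_left hs₁, sat_mono Set.subset_union_right hs₂⟩
  | or f g ihf ihg =>
      rintro Z (hf | hg)
      · obtain ⟨Z₁, hZ₁, ho₁, hs₁⟩ := ihf hf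
        exact ⟨Z₁, hZ₁, fun r hr => Or.inl (ho₁ r hr), Or.inl hs₁⟩
      · obtain ⟨Z₂, hZ₂, ho₂, hs₂⟩ := ihg hg
        exact ⟨Z₂, hZ₂, fun r hr => Or.inr (ho₂ r hr), Or.inr hs₂⟩

noncomputable def shrink (f : TransForm V Q) (s : Set V) (Z : Set Q) : Set Q :=
  if h : f.sat s Z then (exists_shrink h).choose else ∅

lemma shrink_subset (f : TransForm V Q) (s : Set V) (Z : Set Q) : shrink f s Z ⊆ Z := by
  unfold shrink; split
  · exact (exists_shrink ‹_›).choose_spec.1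
  · exact Set.empty_subset _

lemma shrink_occurs {f : TransForm V Q} {s : Set V} {Z : Set Q} {r : Q}
    (hr : r ∈ shrink f s Z) : f.occurs r := by
  unfold shrink at hr; split at hr
  · exact (exists_shrink ‹_›).choose_spec.2.1 r hr
  · exact hr.elim

lemma shrink_sat {f : TransForm V Q} {s : Set V} {Z : Set Q} (h : f.sat s Z) :
    f.sat s (shrink f s Z) := by
  unfold shrink; split
  · exact (exists_shrink ‹_›).choose_spec.2.2
  · exact absurd h ‹_›

lemma mem_configs_succ (A : LWAA V Q) (e : ℕ → Set (Q × Q)) (i : ℕ) (r : Q) :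
    r ∈ A.configs e (i + 1) ↔ ∃ a ∈ A.configs e i, (a, r) ∈ e i := Iff.rfl

lemma configs_zero (A : LWAA V Q) (e : ℕ → Set (Q × Q)) : A.configs e 0 = {A.init} := rfl

lemma path_mem (A : LWAA V Q) {e : ℕ → Set (Q × Q)} {p : ℕ → Q} (hp : A.IsPath e p) :
    ∀ i, p i ∈ A.configs e i := by
  intro i
  induction i with
  | zero => rw [configs_zero, hp.1]; rfl
  | succ i ih => exact ⟨p i, ih, hp.2 i⟩

lemma exists_backpath (A : LWAA V Q) (e : ℕ → Set (Q × Q)) :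
    ∀ (i : ℕ) (a : Q), a ∈ A.configs e i →
      ∃ g : ℕ → Q, g 0 = A.init ∧ (∀ j < i, (g j, g (j + 1)) ∈ e j) ∧ g i = a := by
  intro i
  induction i with
  | zero => intro a ha; exact ⟨fun _ => a, ha, fun j hj => absurd hj (by omega), rfl⟩
  | succ i ih =>
      rintro a ⟨b, hb, hba⟩
      obtain ⟨g, hg0, hge, hgi⟩ := ih b hb
      refine ⟨fun j => if j ≤ i then g j else a, by simp [hg0], ?_, by simp⟩
      intro j hj
      rcases Nat.lt_or_ge j i with h | h
      · simpa [Nat.le_of_lt h, Nat.succ_le_of_lt h] using hge j h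
      · have hji : j = i := by omega
        subst hji
        simp [hgi, hba]

lemma not_accepting_of_loop (A : LWAA V Q) {e : ℕ → Set (Q × Q)} {r : Q} {i0 : ℕ}
    (hF : r ∈ A.final) (hr : r ∈ A.configs e i0) (hloop : ∀ i, i0 ≤ i → (r, r) ∈ e i) :
    ¬ A.Accepting e := by
  intro hacc
  obtain ⟨g, hg0, hge, hgi⟩ := exists_backpath A e i0 r hr
  set p : ℕ → Q := fun j => if j < i0 then g j else r with hp
  have hpath : A.IsPath e p := by
    constructor
    · rcases Nat.eq_zero_or_pos i0 with h0 | h0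
      · subst h0
        have : r = A.init := by rw [configs_zero] at hr; exact hr
        simp [hp, this]
      · simp [hp, h0, hg0]
    · intro j
      rcases Nat.lt_or_ge (j + 1) i0 with h | h
      · have hj : j < i0 := by omega
        simp only [hp, if_pos h, if_pos hj]
        exact hge j hj
      · rcases Nat.lt_or_ge j i0 with h2 | h2
        · have hj1 : j + 1 = i0 := by omega
          simp only [hp, if_pos h2, if_neg (by omega : ¬ j + 1 < i0)]
          have h3 := hge j h2
          rw [hj1, hgi] at h3
          exact h3
        · simp only [hp, if_neg (by omega : ¬ j < i0), if_neg (by omega : ¬ j + 1 < i0)]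
          exact hloop j h2
  have hfin := hacc p hpath
  have hinf : {i : ℕ | p i ∈ A.final}.Infinite := by
    apply Set.infinite_of_forall_exists_gt
    intro a
    refine ⟨a + i0 + 1, ?_, by omega⟩
    simp only [hp, Set.mem_setOf_eq, if_neg (by omega : ¬ a + i0 + 1 < i0)]
    exact hF
  exact hinf hfin

end Aux
section Aux2
variable {V Q : Type}

attribute [local instance] Classical.propDecidable

lemma stabilize [Finite Q] (A : LWAA V Q) (p : ℕ → Q)
    (hstep : ∀ i, (A.delta (p i)).occurs (p (i + 1))) :
    ∃ i0 r, ∀ i, i0 ≤ i → p i = r := by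
  set R : Q → Q → Prop := fun a b => (A.delta a).occurs b with hR
  have hchain : ∀ i j, i ≤ j → Relation.ReflTransGen R (p i) (p j) := by
    intro i j hij
    induction j, hij using Nat.le_induction with
    | base => exact Relation.ReflTransGen.refl
    | succ j hij ih => exact ih.tail (hstep j)
  obtain ⟨r, hr⟩ := Finite.exists_infinite_fiber p
  have hrinf : Set.Infinite (p ⁻¹' {r}) := Set.infinite_coe_iff.mp hr
  obtain ⟨i0, hi0⟩ := hrinf.nonempty
  refine ⟨i0, r, fun i hi => ?_⟩
  obtain ⟨j, hjmem, hij⟩ := hrinf.exists_gt i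
  have h1 : Relation.ReflTransGen R (p i) r := by
    have := hchain i j (le_of_lt hij)
    rwa [show p j = r from hjmem] at this
  have h2 : Relation.ReflTransGen R r (p i) := by
    have := hchain i0 i hi
    rwa [show p i0 = r from hi0] at this
  exact A.antisymm (p i) r h1 h2

/-- old edge successors -/
def eset (e : ℕ → Set (Q × Q)) (i : ℕ) (a : Q) : Set Q := {r | (a, r) ∈ e i}

/-- new (redirected) successor set of `a` at step `i`, when the new configuration is `c` -/
noncomputable def newSet (A : LWAA V Q) (σ : ℕ → Set V) (e : ℕ → Set (Q × Q)) (q : Q)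
    (i : ℕ) (c : Set Q) (a : Q) : Set Q :=
  if q ∈ c ∧ q ∉ eset e i q ∧ a ≠ q ∧ q ∈ eset e i a
  then shrink (A.delta a) (σ i) ((eset e i a \ {q}) ∪ eset e i q)
  else eset e i a

noncomputable def newConf (A : LWAA V Q) (σ : ℕ → Set V) (e : ℕ → Set (Q × Q)) (q : Q) :
    ℕ → Set Q
  | 0 => {A.init}
  | i + 1 => {r | ∃ a ∈ newConf A σ e q i, r ∈ newSet A σ e q i (newConf A σ e q i) a}

noncomputable def newE (A : LWAA V Q) (σ : ℕ → Set V) (e : ℕ → Set (Q × Q)) (q : Q)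
    (i : ℕ) : Set (Q × Q) :=
  {p | p.1 ∈ newConf A σ e q i ∧ p.2 ∈ newSet A σ e q i (newConf A σ e q i) p.1}

lemma newConf_eq (A : LWAA V Q) (σ : ℕ → Set V) (e : ℕ → Set (Q × Q)) (q : Q) :
    ∀ i, A.configs (newE A σ e q) i = newConf A σ e q i := by
  intro i
  induction i with
  | zero => rfl
  | succ i ih =>
      ext r
      rw [mem_configs_succ, ih]
      constructor
      · rintro ⟨a, ha, hr⟩
        exact ⟨a, ha, hr.2⟩
      · rintro ⟨a, ha, hr⟩
        exact ⟨a, ha, ha, hr⟩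

lemma newConf_subset (A : LWAA V Q) (σ : ℕ → Set V) (e : ℕ → Set (Q × Q)) (q : Q) :
    ∀ i, newConf A σ e q i ⊆ A.configs e i := by
  intro i
  induction i with
  | zero => exact fun r hr => hr
  | succ i ih =>
      rintro r ⟨a, ha, hr⟩
      have haC : a ∈ A.configs e i := ih ha
      unfold newSet at hr
      split at hr
      · rename_i hcond
        have hbig := shrink_subset (A.delta a) (σ i) ((eset e i a \ {q}) ∪ eset e i q) hr
        rcases hbig with h | h
        · exact ⟨a, haC, h.1⟩
        · exact ⟨q, ih hcond.1, h⟩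
      · exact ⟨a, haC, hr⟩

/-- If `q` is active in the new dag and its old transition avoids `q`,
then `q` is not active at the next instant of the new dag. -/
lemma newConf_not_mem_succ (A : LWAA V Q) (σ : ℕ → Set V) (e : ℕ → Set (Q × Q)) (q : Q)
    (i : ℕ) (hq : q ∈ newConf A σ e q i) (hqe : q ∉ eset e i q) :
    q ∉ newConf A σ e q (i + 1) := by
  rintro ⟨a, ha, hr⟩
  unfold newSet at hr
  split at hr
  · rename_i hcond
    have := shrink_subset (A.delta a) (σ i) ((eset e i a \ {q}) ∪ eset e i q) hr
    rcases this with h | h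
    · exact h.2 rfl
    · exact hqe h
  · rename_i hcond
    by_cases haq : a = q
    · subst haq; exact hqe hr
    · exact hcond ⟨hq, hqe, haq, hr⟩

end Aux2
section Aux3
variable {V Q : Type}

attribute [local instance] Classical.propDecidable

lemma bigsat (A : LWAA V Q) (hsimple : A.Simple) {σ : ℕ → Set V} {e : ℕ → Set (Q × Q)}
    {q a : Q} {i : ℕ} (hqF : q ∈ A.final) (hrun : A.IsRunDag σ e)
    (haC : a ∈ A.configs e i) (hqC : q ∈ A.configs e i)
    (hqe : q ∉ eset e i q) (_hqa : q ∈ eset e i a) :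
    (A.delta a).sat (σ i) ((eset e i a \ {q}) ∪ eset e i q) := by
  have hsa : (A.delta a).sat (σ i) (eset e i a) := (hrun i).2.2 a haC
  have hsq : (A.delta q).sat (σ i) (eset e i q) := (hrun i).2.2 q hqC
  have hsub : eset e i a ⊆ (eset e i a \ {q}) ∪ {q} := by
    intro r hr
    by_cases h : r = q
    · exact Or.inr h
    · exact Or.inl ⟨hr, h⟩
  exact hsimple q hqF a (σ i) (eset e i a \ {q}) (eset e i q)
    (fun h => h.2 rfl) hqe (sat_mono hsub hsa) hsq

lemma improve [Finite Q] (A : LWAA V Q) (hsimple : A.Simple) (σ : ℕ → Set V)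
    (e : ℕ → Set (Q × Q)) (q : Q) (hqF : q ∈ A.final)
    (hrun : A.IsRunDag σ e) (hacc : A.Accepting e) :
    ∃ e', A.IsRunDag σ e' ∧ A.Accepting e' ∧
      (∀ i, A.configs e' i ⊆ A.configs e i) ∧
      (∀ m, ∃ i, m ≤ i ∧ q ∉ A.configs e' i) := by
  refine ⟨newE A σ e q, ?_, ?_, ?_, ?_⟩
  · -- IsRunDag
    intro i
    refine ⟨?_, ?_, ?_⟩
    · intro p hp
      rw [newConf_eq]
      exact hp.1
    · intro p hp
      have hr := hp.2
      unfold newSet at hr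
      split at hr
      · exact shrink_occurs hr
      · exact (hrun i).2.1 (p.1, p.2) hr
    · intro a ha
      rw [newConf_eq] at ha
      have hset : {r | (a, r) ∈ newE A σ e q i} = newSet A σ e q i (newConf A σ e q i) a := by
        ext r
        exact ⟨fun h => h.2, fun h => ⟨ha, h⟩⟩
      rw [hset]
      unfold newSet
      split
      · rename_i hcond
        exact shrink_sat (bigsat A hsimple hqF hrun (newConf_subset A σ e q i ha)
          (newConf_subset A σ e q i hcond.1) hcond.2.1 hcond.2.2.2)
      · exact (hrun i).2.2 a (newConf_subset A σ e q i ha)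
  · -- Accepting
    intro p hp
    have hstep : ∀ i, (A.delta (p i)).occurs (p (i + 1)) := by
      intro i
      have h := (hp.2 i).2
      unfold newSet at h
      split at h
      · exact shrink_occurs h
      · exact (hrun i).2.1 (p i, p (i + 1)) h
    obtain ⟨i0, r, hstab⟩ := stabilize A p hstep
    by_cases hrF : r ∈ A.final
    · exfalso
      have hloop : ∀ i, i0 ≤ i → (r, r) ∈ e i := by
        intro i hi
        have h1 := hp.2 i
        rw [hstab i hi, hstab (i + 1) (by omega)] at h1
        have h := h1.2
        unfold newSet at h
        split at h
        · rename_i hcond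
          have hsub := shrink_subset _ _ _ h
          rcases hsub with h2 | h2
          · exact h2.1
          · exfalso
            have hqr : (A.delta q).occurs r := (hrun i).2.1 (q, r) h2
            have hrq : (A.delta r).occurs q := (hrun i).2.1 (r, q) hcond.2.2.2
            exact hcond.2.2.1 (A.antisymm r q (Relation.ReflTransGen.single hrq)
              (Relation.ReflTransGen.single hqr))
        · exact h
      have hrC : r ∈ A.configs e i0 := by
        have hmem := path_mem A hp i0
        rw [newConf_eq, hstab i0 le_rfl] at hmem
        exact newConf_subset A σ e q i0 hmem
      exact not_accepting_of_loop A hrF hrC hloop hacc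
    · apply Set.Finite.subset (Set.finite_Iio i0)
      intro i hi
      simp only [Set.mem_setOf_eq] at hi
      by_contra hcon
      have hii : i0 ≤ i := by simpa [Set.mem_Iio] using hcon
      rw [hstab i hii] at hi
      exact hrF hi
  · -- configs subset
    intro i
    rw [newConf_eq]
    exact newConf_subset A σ e q i
  · -- absence
    intro m
    by_contra hcon
    push_neg at hcon
    have hmem : ∀ i, m ≤ i → q ∈ newConf A σ e q i := by
      intro i hi
      have := hcon i hi
      rwa [newConf_eq] at this
    have hqe : ∀ i, m ≤ i → (q, q) ∈ e i := by
      intro i hi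
      by_contra hne
      exact newConf_not_mem_succ A σ e q i (hmem i hi) hne (hmem (i + 1) (by omega))
    exact not_accepting_of_loop A hqF (newConf_subset A σ e q m (hmem m le_rfl)) hqe hacc

end Aux3
section Aux4
variable {V Q : Type}

attribute [local instance] Classical.propDecidable

lemma iterate [Finite Q] (A : LWAA V Q) (hsimple : A.Simple) (σ : ℕ → Set V) :
    ∀ S : Finset Q, (∀ q ∈ S, q ∈ A.final) →
      ∀ e, A.IsRunDag σ e → A.Accepting e →
        ∃ e', A.IsRunDag σ e' ∧ A.Accepting e' ∧
          ∀ q ∈ S, ∀ m, ∃ i, m ≤ i ∧ q ∉ A.configs e' i := by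
  intro S
  induction S using Finset.induction_on with
  | empty => exact fun _ e hrun hacc => ⟨e, hrun, hacc, by simp⟩
  | insert _ _ hq ih =>
      rename_i q S
      intro hS e hrun hacc
      obtain ⟨e₁, hrun₁, hacc₁, habs₁⟩ :=
        ih (fun q' hq' => hS q' (Finset.mem_insert_of_mem hq')) e hrun hacc
      obtain ⟨e₂, hrun₂, hacc₂, hsub₂, habs₂⟩ :=
        improve A hsimple σ e₁ q (hS q (Finset.mem_insert_self q S)) hrun₁ hacc₁
      refine ⟨e₂, hrun₂, hacc₂, ?_⟩
      intro q' hq' m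
      rcases Finset.mem_insert.mp hq' with rfl | hq'
      · exact habs₂ m
      · obtain ⟨i, hi, hni⟩ := habs₁ q' hq' m
        exact ⟨i, hi, fun h => hni (hsub₂ i h)⟩

end Aux4
theorem simple_lwaa_lang_nonempty_iff {V Q : Type} [Fintype V] [Fintype Q]
    (A : LWAA V Q) (hsimple : A.Simple) :
    A.Lang.Nonempty ↔
      ∃ (n : ℕ) (s : ℕ → Set V) (e : ℕ → Set (Q × Q)) (k : ℕ),
        A.IsFinRunDag s e n ∧ k ≤ n ∧
        A.configs e k = A.configs e (n + 1) ∧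
        (∀ q ∈ A.final, ∃ j : ℕ, k ≤ j ∧ j ≤ n ∧ q ∉ A.configs e j) := by
  classical
  constructor
  · rintro ⟨σ, e, hrun, hacc⟩
    obtain ⟨e', hrun', hacc', habs⟩ :=
      iterate A hsimple σ (Finset.univ.filter (fun q => q ∈ A.final))
        (fun q hq => (Finset.mem_filter.mp hq).2) e hrun hacc
    obtain ⟨C, hC⟩ := Finite.exists_infinite_fiber (fun i => A.configs e' i)
    have hCinf : Set.Infinite ((fun i => A.configs e' i) ⁻¹' {C}) :=
      Set.infinite_coe_iff.mp hC
    obtain ⟨k, hk⟩ := hCinf.nonempty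
    have hkC : A.configs e' k = C := hk
    have habs' : ∀ q, q ∈ A.final → ∃ j, k ≤ j ∧ q ∉ A.configs e' j := fun q hq =>
      habs q (Finset.mem_filter.mpr ⟨Finset.mem_univ q, hq⟩) k
    choose! J hJ1 hJ2 using habs'
    set M := max k (Finset.univ.sup J) with hM
    obtain ⟨m, hmS, hMm⟩ := hCinf.exists_gt M
    have hmC : A.configs e' m = C := hmS
    have hkM : k ≤ M := le_max_left _ _
    refine ⟨m - 1, σ, e', k, fun i _ => hrun' i, by omega, ?_, ?_⟩
    · rw [show m - 1 + 1 = m by omega, hkC, hmC]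
    · intro q hq
      refine ⟨J q, hJ1 q hq, ?_, hJ2 q hq⟩
      have h1 : J q ≤ Finset.univ.sup J := Finset.le_sup (Finset.mem_univ q)
      have h2 : Finset.univ.sup J ≤ M := le_max_right _ _
      omega
  · rintro ⟨n, s, e, k, hfin, hkn, hloop, habs⟩
    set per := n + 1 - k with hper
    have hper0 : 0 < per := by omega
    set wrap : ℕ → ℕ := fun i => if i ≤ n then i else k + (i - k) % per with hwrap
    have hwle : ∀ i, wrap i ≤ n := by
      intro i
      simp only [hwrap]
      split
      · assumption
      · have := Nat.mod_lt (i - k) hper0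
        omega
    have hwsucc : ∀ i, (wrap i = n ∧ wrap (i + 1) = k) ∨
        (wrap i ≤ n ∧ wrap (i + 1) = wrap i + 1) := by
      intro i
      rcases Nat.lt_or_ge i n with hlt | hge
      · right
        constructor
        · simp only [hwrap, if_pos (by omega : i ≤ n)]; omega
        · simp only [hwrap, if_pos (by omega : i ≤ n), if_pos (by omega : i + 1 ≤ n)]
      · rcases Nat.eq_or_lt_of_le hge with heq | hgt
        · left
          constructor
          · simp only [hwrap, if_pos (by omega : i ≤ n)]; omega
          · simp only [hwrap, if_neg (by omega : ¬ i + 1 ≤ n)]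
            have : i + 1 - k = per := by omega
            rw [this, Nat.mod_self]
            omega
        · -- i > n
          have hik : k ≤ i := by omega
          have hni : ¬ i ≤ n := by omega
          have hni1 : ¬ i + 1 ≤ n := by omega
          set r := (i - k) % per with hr
          have hrlt : r < per := Nat.mod_lt _ hper0
          have hkey : (i + 1 - k) % per = (r + 1) % per := by
            have h1 : i + 1 - k = (i - k) + 1 := by omega
            rw [h1, Nat.add_mod]
            by_cases hp1 : per = 1
            · simp only [hp1]
              omega
            · rw [Nat.mod_eq_of_lt (show 1 < per by omega), ← hr]
          by_cases hrp : r + 1 = per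
          · left
            constructor
            · simp only [hwrap, if_neg hni, ← hr]; omega
            · simp only [hwrap, if_neg hni1, hkey, hrp, Nat.mod_self]
              omega
          · right
            have hrp1 : r + 1 < per := by omega
            constructor
            · exact hwle i
            · simp only [hwrap, if_neg hni, if_neg hni1, hkey,
                Nat.mod_eq_of_lt hrp1, ← hr]
              omega
    set σ' : ℕ → Set V := fun i => s (wrap i) with hσ'
    set e' : ℕ → Set (Q × Q) := fun i => e (wrap i) with he'
    have hconf : ∀ i, A.configs e' i = A.configs e (wrap i) := by
      intro i
      induction i with
      | zero =>
          have h0 : wrap 0 = 0 := by simp only [hwrap, if_pos (Nat.zero_le n)]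
          rw [h0, configs_zero, configs_zero]
      | succ i ih =>
          have hstep : A.configs e' (i + 1) = A.configs e (wrap i + 1) := by
            ext x
            rw [mem_configs_succ, mem_configs_succ, ih]
          rcases hwsucc i with ⟨h1, h2⟩ | ⟨h1, h2⟩
          · rw [hstep, h1, h2, ← hloop]
          · rw [hstep, h2]
    have hrun' : A.IsRunDag σ' e' := by
      intro i
      obtain ⟨h1, h2, h3⟩ := hfin (wrap i) (hwle i)
      refine ⟨?_, h2, ?_⟩
      · intro p hp
        rw [hconf]
        exact h1 p hp
      · intro a ha
        rw [hconf] at ha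
        exact h3 a ha
    have hacc' : A.Accepting e' := by
      intro p hp
      have hstep : ∀ i, (A.delta (p i)).occurs (p (i + 1)) := fun i =>
        (hfin (wrap i) (hwle i)).2.1 (p i, p (i + 1)) (hp.2 i)
      obtain ⟨i0, rr, hstab⟩ := stabilize A p hstep
      by_cases hrF : rr ∈ A.final
      · exfalso
        obtain ⟨j, hkj, hjn, hnot⟩ := habs rr hrF
        set i := j + (i0 + n + 1) * per with hi
        have hmul : i0 + n + 1 ≤ (i0 + n + 1) * per :=
          Nat.le_mul_of_pos_right _ hper0
        have hii0 : i0 ≤ i := by omega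
        have hin : ¬ i ≤ n := by omega
        have hwi : wrap i = j := by
          simp only [hwrap, if_neg hin]
          have hik : i - k = (j - k) + (i0 + n + 1) * per := by omega
          rw [hik, Nat.add_mul_mod_self_right,
            Nat.mod_eq_of_lt (show j - k < per by omega)]
          omega
        have hmem : p i ∈ A.configs e' i := path_mem A hp i
        rw [hconf, hwi, hstab i hii0] at hmem
        exact hnot hmem
      · apply Set.Finite.subset (Set.finite_Iio i0)
        intro i hi
        simp only [Set.mem_setOf_eq] at hi
        by_contra hcon
        have hii : i0 ≤ i := by simpa [Set.mem_Iio] using hcon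
        rw [hstab i hii] at hi
        exact hrF hi
    exact ⟨σ', e', hrun', hacc'⟩
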